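/- Adaptive regenerating codes are correct (correctness part of Theorem 3): Let k, g be positive integers and M a positive real. Let t_0,…,t_{g−1} and d_0,…,d_{g−1} be integers with t_i ≥ 1 and d_i ≥ k for all i, and set β_i = β′_i = M/(k(d_i − k + t_i)). Then for every sequence u_0,…,u_{g−1} of integers with 1 ≤ u_i ≤ t_i for all i and ∑_{i<g} u_i = k, writing S_i = ∑_{j<i} u_j, one has ∑_{i<g} u_i · min(M/k, (d_i − S_i)·β_i + (t_i − u_i)·β′_i) ≥ M. -/

import Mathlib

/-- Adaptive regenerating codes are correct (correctness part of Theorem 3). -/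
theorem adaptive_regenerating_correctness (k g : ℕ) (hk : 0 < k) (hg : 0 < g)
    (M : ℝ) (hM : 0 < M)
    (t d : ℕ → ℕ) (ht : ∀ i < g, 1 ≤ t i) (hd : ∀ i < g, k ≤ d i)
    (β β' : ℕ → ℝ)
    (hβ : ∀ i < g, β i = M / (k * ((d i : ℝ) - k + t i)))
    (hβ' : ∀ i < g, β' i = M / (k * ((d i : ℝ) - k + t i)))
    (u : ℕ → ℕ) (hu : ∀ i < g, 1 ≤ u i ∧ u i ≤ t i)
    (hsum : ∑ i ∈ Finset.range g, u i = k) :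
    ∑ i ∈ Finset.range g, (u i : ℝ) *
        min (M / k) (((d i : ℝ) - ((∑ j ∈ Finset.range i, u j : ℕ) : ℝ)) * β i
          + ((t i : ℝ) - (u i : ℝ)) * β' i) ≥ M := by
  have hk' : (0:ℝ) < k := by exact_mod_cast hk
  have key : ∀ i ∈ Finset.range g,
      (u i : ℝ) * min (M / k) (((d i : ℝ) - ((∑ j ∈ Finset.range i, u j : ℕ) : ℝ)) * β i
          + ((t i : ℝ) - (u i : ℝ)) * β' i) = (u i : ℝ) * (M / k) := by
    intro i hi
    rw [Finset.mem_range] at hi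
    have hD : (1:ℝ) ≤ (d i : ℝ) - k + t i := by
      have h1 : (k:ℝ) ≤ d i := by exact_mod_cast hd i hi
      have h2 : (1:ℝ) ≤ t i := by exact_mod_cast ht i hi
      linarith
    have hDpos : (0:ℝ) < (d i : ℝ) - k + t i := by linarith
    have hSu : ((∑ j ∈ Finset.range i, u j : ℕ) : ℝ) + u i ≤ k := by
      have : ∑ j ∈ Finset.range (i+1), u j ≤ ∑ j ∈ Finset.range g, u j := by
        apply Finset.sum_le_sum_of_subset
        exact Finset.range_subset_range.2 hi
      rw [Finset.sum_range_succ, hsum] at this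
      exact_mod_cast this
    have hβpos : (0:ℝ) < β i := by
      rw [hβ i hi]; positivity
    congr 1
    apply min_eq_left
    rw [hβ i hi, hβ' i hi]
    have hβval : (0:ℝ) < M / (k * ((d i : ℝ) - k + t i)) := by positivity
    have hcoef : ((d i : ℝ) - k + t i) ≤
        ((d i : ℝ) - ((∑ j ∈ Finset.range i, u j : ℕ) : ℝ)) + ((t i : ℝ) - (u i : ℝ)) := by
      linarith
    calc M / k = ((d i : ℝ) - k + t i) * (M / (k * ((d i : ℝ) - k + t i))) := by
          field_simp
      _ ≤ (((d i : ℝ) - ((∑ j ∈ Finset.range i, u j : ℕ) : ℝ)) + ((t i : ℝ) - (u i : ℝ)))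
          * (M / (k * ((d i : ℝ) - k + t i))) :=
          mul_le_mul_of_nonneg_right hcoef hβval.le
      _ = _ := by ring
  rw [Finset.sum_congr rfl key, ← Finset.sum_mul]
  have : ((∑ i ∈ Finset.range g, u i : ℕ) : ℝ) = (k : ℝ) := by exact_mod_cast hsum
  push_cast at this
  rw [this, mul_div_cancel₀ M (ne_of_gt hk')]
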